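/- Faithfully flat descent of saturatedness: if R' is a faithfully flat R-algebra and A ⊗_R R' is saturated in B ⊗_R R' over R' (i.e., (A⊗_R R')*_{B⊗_R R',R'} equals the image of A ⊗_R R'), then A is saturated in B over R, i.e., A*_{B,R} = g(A). -/

import Mathlib

open TensorProduct

/-- Integral closure of an ideal: `x` satisfies an equation of integral dependence over `I`. -/
def Ideal.intClosure {S : Type*} [CommRing S] (I : Ideal S) : Set S :=
  {x | ∃ n : ℕ, 0 < n ∧ ∃ a : ℕ → S, (∀ i ∈ Finset.Icc 1 n, a i ∈ I ^ i) ∧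
      x ^ n + ∑ i ∈ Finset.Icc 1 n, a i * x ^ (n - i) = 0}

/-- Functoriality of the integral closure of an ideal. -/
lemma intClosure_map_aux {S T : Type*} [CommRing S] [CommRing T] (f : S →+* T)
    (I : Ideal S) (J : Ideal T) (hIJ : ∀ s ∈ I, f s ∈ J) {x : S}
    (hx : x ∈ I.intClosure) : f x ∈ J.intClosure := by
  obtain ⟨n, hn, a, ha, heq⟩ := hx
  refine ⟨n, hn, fun i => f (a i), fun i hi => ?_, ?_⟩
  · have h1 : Ideal.map f (I ^ i) ≤ J ^ i := by
      rw [Ideal.map_pow]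
      exact Ideal.pow_right_mono (Ideal.map_le_iff_le_comap.2 hIJ) i
    exact h1 (Ideal.mem_map_of_mem f (ha i hi))
  · have h2 := congrArg f heq
    simp only [map_add, map_pow, map_sum, map_mul, map_zero] at h2
    exact h2

/-- Membership of an ideal in its own integral closure. -/
lemma mem_intClosure_of_mem {S : Type*} [CommRing S] {I : Ideal S} {x : S}
    (hx : x ∈ I) : x ∈ I.intClosure := by
  refine ⟨1, one_pos, fun _ => -x, ?_, ?_⟩
  · intro i hi
    simp only [Finset.mem_Icc] at hi
    obtain rfl : i = 1 := le_antisymm hi.2 hi.1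
    simpa using I.neg_mem hx
  · simp

variable (R A B : Type*) [CommRing R] [CommRing A] [CommRing B]
  [Algebra R A] [Algebra R B] [Algebra A B] [IsScalarTower R A B]

/-- The diagonal map `b ↦ b ⊗ 1 - 1 ⊗ b`. -/
noncomputable def lipDelta (b : B) : B ⊗[R] B := b ⊗ₜ[R] 1 - 1 ⊗ₜ[R] b

/-- The canonical morphism `B ⊗[R] B → B ⊗[A] B`. -/
noncomputable def lipPhi : B ⊗[R] B →ₐ[R] B ⊗[A] B :=
  Algebra.TensorProduct.lift
    ((Algebra.TensorProduct.includeLeft : B →ₐ[A] B ⊗[A] B).restrictScalars R)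
    ((Algebra.TensorProduct.includeRight : B →ₐ[A] B ⊗[A] B).restrictScalars R)
    (fun _ _ => Commute.all _ _)

@[simp]
lemma lipPhi_tmul (b₁ b₂ : B) : lipPhi R A B (b₁ ⊗ₜ[R] b₂) = b₁ ⊗ₜ[A] b₂ := by
  simp [lipPhi, Algebra.TensorProduct.lift_tmul]

/-- The relative Lipschitz saturation of `A` in `B` over `R`. -/
noncomputable def lipSat : Set B :=
  {x | lipDelta R B x ∈ (RingHom.ker (lipPhi R A B)).intClosure}


attribute [local instance] Algebra.TensorProduct.rightAlgebra

set_option maxHeartbeats 1600000 in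
/-- Faithfully flat descent of saturatedness: if `R'` is a faithfully flat
`R`-algebra and `A ⊗_R R'` is saturated in `B ⊗_R R'` over `R'`, then `A` is
saturated in `B` over `R`, i.e. `A*_{B,R} = g(A)`. -/
theorem lipSat_faithfully_flat_descent (R' : Type*) [CommRing R'] [Algebra R R']
    [Module.FaithfullyFlat R R']
    [Algebra (A ⊗[R] R') (B ⊗[R] R')]
    (halg : algebraMap (A ⊗[R] R') (B ⊗[R] R') =
      (Algebra.TensorProduct.map (IsScalarTower.toAlgHom R A B)
        (AlgHom.id R R')).toRingHom)
    (htower : ∀ r : R', algebraMap R' (B ⊗[R] R') r =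
      algebraMap (A ⊗[R] R') (B ⊗[R] R') (algebraMap R' (A ⊗[R] R') r))
    (hsat : @lipSat R' (A ⊗[R] R') (B ⊗[R] R') _ _ _ _ _ _
        (IsScalarTower.of_algebraMap_eq htower) =
      Set.range (algebraMap (A ⊗[R] R') (B ⊗[R] R'))) :
    lipSat R A B = Set.range (algebraMap A B) := by
  haveI : IsScalarTower R' (A ⊗[R] R') (B ⊗[R] R') :=
    IsScalarTower.of_algebraMap_eq htower
  ext x
  constructor
  · intro hx
    -- hx : lipDelta R B x ∈ intClosure of ker (lipPhi R A B)
    have hx' : lipDelta R B x ∈ (RingHom.ker (lipPhi R A B)).intClosure := hx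
    -- the base change map F : B ⊗[R] B → (B ⊗ R') ⊗[R'] (B ⊗ R')
    let l1 : B →ₐ[R] B ⊗[R] R' := Algebra.TensorProduct.includeLeft
    let iL : (B ⊗[R] R') →ₐ[R] (B ⊗[R] R') ⊗[R'] (B ⊗[R] R') :=
      Algebra.TensorProduct.includeLeft
    let iR : (B ⊗[R] R') →ₐ[R'] (B ⊗[R] R') ⊗[R'] (B ⊗[R] R') :=
      Algebra.TensorProduct.includeRight
    let F : B ⊗[R] B →ₐ[R] (B ⊗[R] R') ⊗[R'] (B ⊗[R] R') :=
      Algebra.TensorProduct.lift (iL.comp l1) ((iR.restrictScalars R).comp l1)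
        (fun _ _ => Commute.all _ _)
    have hF_tmul : ∀ b₁ b₂ : B,
        F (b₁ ⊗ₜ[R] b₂) = (b₁ ⊗ₜ[R] (1 : R')) ⊗ₜ[R'] (b₂ ⊗ₜ[R] (1 : R')) := by
      intro b₁ b₂
      simp only [F, Algebra.TensorProduct.lift_tmul, AlgHom.coe_comp,
        AlgHom.coe_restrictScalars', Function.comp_apply]
      simp only [l1, iL, iR, Algebra.TensorProduct.includeLeft_apply,
        Algebra.TensorProduct.includeRight_apply]
      rw [Algebra.TensorProduct.tmul_mul_tmul, mul_one, one_mul]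
    -- the additive map G : B ⊗[A] B → (B ⊗ R') ⊗[A ⊗ R'] (B ⊗ R')
    have hbal : ∀ (a : A) (b₁ b₂ : B),
        ((a • b₁) ⊗ₜ[R] (1 : R')) ⊗ₜ[A ⊗[R] R'] (b₂ ⊗ₜ[R] (1 : R')) =
          (b₁ ⊗ₜ[R] (1 : R')) ⊗ₜ[A ⊗[R] R'] ((a • b₂) ⊗ₜ[R] (1 : R')) := by
      intro a b₁ b₂
      have hmap : ∀ b : B, (a • b) ⊗ₜ[R] (1 : R') =
          algebraMap (A ⊗[R] R') (B ⊗[R] R') (a ⊗ₜ[R] (1 : R')) * (b ⊗ₜ[R] (1 : R')) := by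
        intro b
        rw [halg]
        simp only [AlgHom.toRingHom_eq_coe, RingHom.coe_coe, Algebra.TensorProduct.map_tmul,
          AlgHom.coe_id, id_eq, IsScalarTower.coe_toAlgHom']
        rw [Algebra.TensorProduct.tmul_mul_tmul, mul_one, Algebra.smul_def]
      rw [hmap b₁, hmap b₂, ← Algebra.smul_def, ← Algebra.smul_def, smul_tmul]
    let φ : B →+ B →+ (B ⊗[R] R') ⊗[A ⊗[R] R'] (B ⊗[R] R') :=
      AddMonoidHom.mk'
        (fun b₁ => AddMonoidHom.mk'
          (fun b₂ => (b₁ ⊗ₜ[R] (1 : R')) ⊗ₜ[A ⊗[R] R'] (b₂ ⊗ₜ[R] (1 : R')))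
          (fun x y => by rw [add_tmul, tmul_add]))
        (fun x y => by
          ext b₂
          simp only [AddMonoidHom.mk'_apply, AddMonoidHom.add_apply]
          rw [add_tmul, add_tmul])
    let G : B ⊗[A] B →+ (B ⊗[R] R') ⊗[A ⊗[R] R'] (B ⊗[R] R') :=
      TensorProduct.liftAddHom φ (fun a b₁ b₂ => hbal a b₁ b₂)
    have hcomm : ∀ z : B ⊗[R] B,
        lipPhi R' (A ⊗[R] R') (B ⊗[R] R') (F z) = G (lipPhi R A B z) := by
      intro z
      induction z using TensorProduct.induction_on with
      | zero => simp
      | tmul b₁ b₂ =>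
          rw [hF_tmul, lipPhi_tmul, lipPhi_tmul]
          rfl
      | add u v hu hv =>
          rw [map_add, map_add, map_add, hu, hv]
          exact (map_add G _ _).symm
    have hker : ∀ z ∈ RingHom.ker (lipPhi R A B),
        F z ∈ RingHom.ker (lipPhi R' (A ⊗[R] R') (B ⊗[R] R')) := by
      intro z hz
      rw [RingHom.mem_ker] at hz ⊢
      rw [hcomm z, hz, map_zero]
    have hdelta : F (lipDelta R B x) = lipDelta R' (B ⊗[R] R') (x ⊗ₜ[R] (1 : R')) := by
      simp only [lipDelta, map_sub, hF_tmul]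
      rfl
    have hmem : x ⊗ₜ[R] (1 : R') ∈
        lipSat R' (A ⊗[R] R') (B ⊗[R] R') := by
      show lipDelta R' (B ⊗[R] R') (x ⊗ₜ[R] (1 : R')) ∈
        (RingHom.ker (lipPhi R' (A ⊗[R] R') (B ⊗[R] R'))).intClosure
      rw [← hdelta]
      exact intClosure_map_aux F.toRingHom _ _ hker hx'
    rw [hsat] at hmem
    obtain ⟨y, hy⟩ := hmem
    -- descent using faithful flatness
    let gl : A →ₗ[R] B := (IsScalarTower.toAlgHom R A B).toLinearMap
    let π : B →ₗ[R] B ⧸ LinearMap.range gl := (LinearMap.range gl).mkQ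
    have hπg : ∀ a : A, π (gl a) = 0 := by
      intro a
      simp only [π, Submodule.mkQ_apply, Submodule.Quotient.mk_eq_zero]
      exact ⟨a, rfl⟩
    have h0 : π x ⊗ₜ[R] (1 : R') = 0 := by
      have hmapeq : ∀ z : A ⊗[R] R', TensorProduct.map gl LinearMap.id z =
          algebraMap (A ⊗[R] R') (B ⊗[R] R') z := by
        intro z
        rw [halg]
        induction z using TensorProduct.induction_on with
        | zero => simp
        | tmul a r' => simp [gl]
        | add u v hu hv => rw [map_add, map_add, hu, hv]
      have hy' : TensorProduct.map gl LinearMap.id y = x ⊗ₜ[R] (1 : R') := by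
        rw [hmapeq y, hy]
      have hz : ∀ z : A ⊗[R] R',
          LinearMap.rTensor R' π (TensorProduct.map gl LinearMap.id z) = 0 := by
        intro z
        induction z using TensorProduct.induction_on with
        | zero => simp
        | tmul a r' => simp [hπg a]
        | add u v hu hv => rw [map_add, map_add, hu, hv, add_zero]

      have := hz y
      rw [hy'] at this
      simpa using this
    have hall : ∀ r' : R', π x ⊗ₜ[R] r' = 0 := by
      intro r'
      have := congrArg (LinearMap.lTensor (B ⧸ LinearMap.range gl)
        (LinearMap.mulLeft R r')) h0
      simpa using this
    have hfzero : LinearMap.toSpanSingleton R (B ⧸ LinearMap.range gl) (π x) = 0 := by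
      rw [Module.FaithfullyFlat.zero_iff_rTensor_zero R R']
      apply LinearMap.ext
      intro z
      induction z using TensorProduct.induction_on with
      | zero => simp
      | tmul r r' =>
          simp only [LinearMap.rTensor_tmul, LinearMap.toSpanSingleton_apply,
            LinearMap.zero_apply]
          rw [← smul_tmul', hall, smul_zero]
      | add u v hu hv =>
          simp only [LinearMap.zero_apply] at hu hv ⊢
          rw [map_add, hu, hv, add_zero]
    have hπx : π x = 0 := by
      have := congrArg (fun f => f 1) hfzero
      simpa using this
    have : x ∈ LinearMap.range gl := by
      rwa [← Submodule.Quotient.mk_eq_zero, ← Submodule.mkQ_apply]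
    obtain ⟨a, ha⟩ := this
    exact ⟨a, ha⟩
  · rintro ⟨a, rfl⟩
    show lipDelta R B (algebraMap A B a) ∈ (RingHom.ker (lipPhi R A B)).intClosure
    apply mem_intClosure_of_mem
    rw [RingHom.mem_ker, lipDelta, map_sub, lipPhi_tmul, lipPhi_tmul]
    rw [Algebra.algebraMap_eq_smul_one, smul_tmul, sub_self]
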